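/- For each i ∈ {0,1}: if p ≡ ±1 (mod 8) then D_i = {(v + p) mod 2p : v ∈ E_i}, and if p ≡ ±3 (mod 8) then D_{(i+1) mod 2} = {(v + p) mod 2p : v ∈ E_i}. Consequently (exchanging the roles of D and E): if p ≡ ±1 (mod 8) then E_i = {(v + p) mod 2p : v ∈ D_i}, and if p ≡ ±3 (mod 8) then E_{(i+1) mod 2} = {(v + p) mod 2p : v ∈ D_i}. -/

import Mathlib

open Polynomial

/-- The generalized cyclotomic class `D_i = {g^(2n+i) mod 2p : n = 0,...,(p-3)/2}` in `Z_{2p}`. -/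
def Dcl (p g : ℕ) (i : ℕ) : Finset (ZMod (2 * p)) :=
  (Finset.range ((p - 1) / 2)).image (fun n => (g : ZMod (2 * p)) ^ (2 * n + i))

/-- The generalized cyclotomic class `E_i = {2u mod 2p : u ∈ D_i}` in `Z_{2p}`. -/
def Ecl (p g : ℕ) (i : ℕ) : Finset (ZMod (2 * p)) :=
  (Dcl p g i).image (fun u => 2 * u)

/-- In a finite group, an element of maximal order generates. -/
lemma exists_pow_eq' {G : Type*} [Group G] [Finite G] (x : G)
    (hx : orderOf x = Nat.card G) (y : G) : ∃ m : ℕ, x ^ m = y := by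
  have h1 : Subgroup.zpowers x = ⊤ := by
    apply Subgroup.eq_top_of_card_eq
    rw [Nat.card_zpowers, hx]
  have h2 : y ∈ Submonoid.powers x := by
    rw [mem_powers_iff_mem_zpowers, h1]
    trivial
  obtain ⟨m, hm⟩ := h2
  exact ⟨m, hm⟩

/-- Membership criterion for `Dcl`. -/
lemma mem_Dcl (p g : ℕ) (hp3 : 3 ≤ p) (hpodd : p % 2 = 1)
    (hord : orderOf (g : ZMod (2 * p)) = p - 1) (a : ℕ) (x : ZMod (2 * p)) :
    x ∈ Dcl p g a ↔ ∃ m : ℕ, m % 2 = a % 2 ∧ (g : ZMod (2 * p)) ^ m = x := by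
  set h : ZMod (2 * p) := (g : ZMod (2 * p)) with hh
  set N : ℕ := (p - 1) / 2 with hNdef
  have hN : p - 1 = 2 * N := by omega
  have hNpos : 0 < N := by omega
  have h2N : h ^ (2 * N) = 1 := by
    rw [← hN, ← hord]; exact pow_orderOf_eq_one h
  have hordsq : orderOf (h ^ 2) = N := by
    rw [orderOf_pow' h (two_ne_zero), hord, hN]
    have hg : Nat.gcd (2 * N) 2 = 2 := by
      have := Nat.gcd_mul_left 2 N 1
      simpa using this
    rw [hg]
    omega
  constructor
  · rintro hx
    simp only [Dcl, Finset.mem_image, Finset.mem_range] at hx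
    obtain ⟨n, _, rfl⟩ := hx
    exact ⟨2 * n + a, by omega, rfl⟩
  · rintro ⟨m, hm2, rfl⟩
    simp only [Dcl, Finset.mem_image, Finset.mem_range]
    set m' : ℕ := m + (2 * N) * a with hm'def
    have hmm' : h ^ m' = h ^ m := by
      rw [hm'def, pow_add, pow_mul, h2N, one_pow, mul_one]
    have hma : a ≤ m' := by
      calc a ≤ (2 * N) * a := Nat.le_mul_of_pos_left a (by omega)
        _ ≤ m + (2 * N) * a := Nat.le_add_left _ _
    obtain ⟨w, hw⟩ : ∃ w, m' = m + 2 * w := ⟨N * a, by rw [hm'def]; ring⟩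
    have hpar : m' % 2 = a % 2 := by omega
    obtain ⟨t, ht⟩ : ∃ t, m' = a + 2 * t := ⟨(m' - a) / 2, by omega⟩
    refine ⟨t % N, Nat.mod_lt _ hNpos, ?_⟩
    have hsq : (h ^ 2) ^ (t % N) = (h ^ 2) ^ t := by
      have := pow_mod_orderOf (h ^ 2) t
      rwa [hordsq] at this
    calc h ^ (2 * (t % N) + a) = (h ^ 2) ^ (t % N) * h ^ a := by rw [pow_add, pow_mul]
      _ = (h ^ 2) ^ t * h ^ a := by rw [hsq]
      _ = h ^ (2 * t + a) := by rw [← pow_mul, ← pow_add]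
      _ = h ^ m' := by rw [ht, Nat.add_comm]
      _ = h ^ m := hmm'

/-- Membership criterion for `Ecl`. -/
lemma mem_Ecl (p g : ℕ) (hp3 : 3 ≤ p) (hpodd : p % 2 = 1)
    (hord : orderOf (g : ZMod (2 * p)) = p - 1) (a : ℕ) (x : ZMod (2 * p)) :
    x ∈ Ecl p g a ↔ ∃ m : ℕ, m % 2 = a % 2 ∧ 2 * (g : ZMod (2 * p)) ^ m = x := by
  simp only [Ecl, Finset.mem_image]
  constructor
  · rintro ⟨u, hu, rfl⟩
    obtain ⟨m, hm2, rfl⟩ := (mem_Dcl p g hp3 hpodd hord a u).mp hu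
    exact ⟨m, hm2, rfl⟩
  · rintro ⟨m, hm2, rfl⟩
    exact ⟨_, (mem_Dcl p g hp3 hpodd hord a _).mpr ⟨m, hm2, rfl⟩, rfl⟩

theorem stmt8 (p g : ℕ) (hp : p.Prime) (hpodd : Odd p)
    (hgodd : Odd g)
    (hg1 : orderOf (g : ZMod p) = p - 1)
    (hg2 : orderOf (g : ZMod (2 * p)) = p - 1)
    (i : ℕ) (hi : i < 2) :
    ((p % 8 = 1 ∨ p % 8 = 7) →
      Dcl p g i = (Ecl p g i).image (fun v => v + (p : ZMod (2 * p))) ∧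
      Ecl p g i = (Dcl p g i).image (fun v => v + (p : ZMod (2 * p)))) ∧
    ((p % 8 = 3 ∨ p % 8 = 5) →
      Dcl p g ((i + 1) % 2) = (Ecl p g i).image (fun v => v + (p : ZMod (2 * p))) ∧
      Ecl p g ((i + 1) % 2) = (Dcl p g i).image (fun v => v + (p : ZMod (2 * p)))) := by
  have hp2 : p % 2 = 1 := Nat.odd_iff.mp hpodd
  have hp3 : 3 ≤ p := by
    have := hp.two_le
    omega
  haveI : Fact p.Prime := ⟨hp⟩
  haveI : NeZero (2 * p) := ⟨by omega⟩
  set h : ZMod (2 * p) := (g : ZMod (2 * p)) with hh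
  set N : ℕ := (p - 1) / 2 with hNdef
  have hN : p - 1 = 2 * N := by omega
  have h2N : h ^ (2 * N) = 1 := by rw [← hN, ← hg2]; exact pow_orderOf_eq_one h
  have hgpos : 1 ≤ g := by
    rcases Nat.eq_zero_or_pos g with h0 | h1
    · exfalso; rw [h0] at hgodd; simp [Nat.odd_iff] at hgodd
    · exact h1
  -- p * h^m = p
  have hph : ∀ m : ℕ, (p : ZMod (2 * p)) * h ^ m = p := by
    intro m
    obtain ⟨s, hs⟩ := hgodd.pow (n := m)
    have hmod : p * g ^ m ≡ p [MOD 2 * p] := by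
      refine ((Nat.modEq_iff_dvd' ?_).mpr ⟨s, ?_⟩).symm
      · exact Nat.le_mul_of_pos_right p (Nat.one_le_pow _ _ hgpos)
      · exact Nat.sub_eq_of_eq_add (by rw [hs]; ring)
    have := (ZMod.natCast_eq_natCast_iff _ _ _).mpr hmod
    push_cast at this
    exact this
  -- p * p = p, p + p = 0
  have hpp : (p : ZMod (2 * p)) * p = p := by
    have hmod : p * p ≡ p [MOD 2 * p] := by
      refine ((Nat.modEq_iff_dvd' ?_).mpr ⟨N, ?_⟩).symm
      · exact Nat.le_mul_of_pos_right p (by omega)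
      · refine Nat.sub_eq_of_eq_add ?_
        have hpe : p = 2 * N + 1 := by omega
        rw [hpe]; ring
    have := (ZMod.natCast_eq_natCast_iff _ _ _).mpr hmod
    push_cast at this
    exact this
  have hpp0 : (p : ZMod (2 * p)) + p = 0 := by
    have := ZMod.natCast_self (2 * p)
    push_cast at this
    linear_combination this
  -- the unit group and the exponent k with h^k = 2 + p
  have hcard : Nat.card (ZMod (2 * p))ˣ = p - 1 := by
    rw [Nat.card_eq_fintype_card, ZMod.card_units_eq_totient,
      Nat.totient_mul (Nat.coprime_two_left.mpr hpodd), Nat.totient_two,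
      Nat.totient_prime hp, one_mul]
  have hunit : IsUnit h := IsUnit.of_pow_eq_one
    (n := p - 1) (by rw [← hg2]; exact pow_orderOf_eq_one h) (by omega)
  have hcunit : IsUnit ((2 : ZMod (2 * p)) + p) := by
    have hcast : ((2 + p : ℕ) : ZMod (2 * p)) = (2 : ZMod (2 * p)) + p := by push_cast; ring
    rw [← hcast, ZMod.isUnit_iff_coprime]
    refine Nat.Coprime.mul_right ?_ ?_
    · exact Nat.coprime_two_right.mpr (Nat.odd_iff.mpr (by omega))
    · refine Nat.coprime_comm.mp ((hp.coprime_iff_not_dvd).mpr ?_)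
      intro hd
      have h2 : p ∣ 2 := by
        have := Nat.dvd_sub hd (dvd_refl p)
        simpa using this
      have := Nat.le_of_dvd (by omega) h2
      omega
  have hordu : orderOf hunit.unit = Nat.card (ZMod (2 * p))ˣ := by
    rw [hcard, ← hg2, ← orderOf_units, IsUnit.unit_spec]
  obtain ⟨k, hk⟩ := exists_pow_eq' hunit.unit hordu hcunit.unit
  have hc : h ^ k = (2 : ZMod (2 * p)) + p := by
    have := congrArg (Units.val) hk
    rwa [Units.val_pow_eq_pow_val, IsUnit.unit_spec, IsUnit.unit_spec] at this
  -- identities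
  have hc2 : (1 + (p : ZMod (2 * p))) * h ^ k = 2 := by
    rw [hc]; linear_combination hpp + 2 * hpp0
  set K : ℕ := k * (2 * N - 1) with hKdef
  set M : ℕ := 2 * N * k with hMdef
  have harr : ∀ m : ℕ, k + (m + K) = m + M := by
    intro m
    have h1 : 2 * N - 1 + 1 = 2 * N := by omega
    calc k + (m + K) = m + k * ((2 * N - 1) + 1) := by rw [hKdef]; ring
      _ = m + 2 * N * k := by rw [h1]; ring
      _ = m + M := by rw [hMdef]
  have hexp : ∀ m : ℕ, h ^ (m + M) = h ^ m := by
    intro m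
    rw [hMdef, pow_add, pow_mul, h2N, one_pow, mul_one]
  have hKpar : K % 2 = k % 2 := by
    rw [hKdef, Nat.mul_mod]
    have h1 : (2 * N - 1) % 2 = 1 := by omega
    rw [h1, mul_one]
    omega
  have idA : ∀ m : ℕ, 2 * h ^ m + p = h ^ (k + m) := by
    intro m
    have : h ^ (k + m) = 2 * h ^ m + (p : ZMod (2 * p)) * h ^ m := by
      rw [pow_add, hc]; ring
    rw [this, hph m]
  have idB : ∀ m : ℕ, h ^ m + p = 2 * h ^ (m + K) := by
    intro m
    have : 2 * h ^ (m + K) = h ^ m + (p : ZMod (2 * p)) * h ^ m := by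
      calc 2 * h ^ (m + K) = (1 + (p : ZMod (2 * p))) * h ^ k * h ^ (m + K) := by rw [hc2]
        _ = (1 + (p : ZMod (2 * p))) * h ^ (k + (m + K)) := by rw [mul_assoc, ← pow_add]
        _ = (1 + (p : ZMod (2 * p))) * h ^ (m + M) := by rw [harr m]
        _ = (1 + (p : ZMod (2 * p))) * h ^ m := by rw [hexp m]
        _ = h ^ m + (p : ZMod (2 * p)) * h ^ m := by ring
    rw [this, hph m]
  -- the two key image computations
  have keyD : ∀ a : ℕ, (Ecl p g a).image (fun v => v + (p : ZMod (2 * p)))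
      = Dcl p g (a + k) := by
    intro a
    ext x
    simp only [Finset.mem_image]
    rw [mem_Dcl p g hp3 hp2 hg2]
    constructor
    · rintro ⟨v, hv, rfl⟩
      obtain ⟨m, hm2, rfl⟩ := (mem_Ecl p g hp3 hp2 hg2 a v).mp hv
      exact ⟨k + m, by omega, (idA m).symm⟩
    · rintro ⟨m, hm2, rfl⟩
      refine ⟨2 * h ^ (m + K), (mem_Ecl p g hp3 hp2 hg2 a _).mpr ⟨m + K, by omega, rfl⟩, ?_⟩
      rw [idA (m + K), harr m, hexp m]
  have keyE : ∀ a : ℕ, (Dcl p g a).image (fun v => v + (p : ZMod (2 * p)))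
      = Ecl p g (a + k) := by
    intro a
    ext x
    simp only [Finset.mem_image]
    rw [mem_Ecl p g hp3 hp2 hg2]
    constructor
    · rintro ⟨v, hv, rfl⟩
      obtain ⟨m, hm2, rfl⟩ := (mem_Dcl p g hp3 hp2 hg2 a v).mp hv
      exact ⟨m + K, by omega, (idB m).symm⟩
    · rintro ⟨m, hm2, rfl⟩
      refine ⟨h ^ (m + k), (mem_Dcl p g hp3 hp2 hg2 a _).mpr ⟨m + k, by omega, rfl⟩, ?_⟩
      rw [idB (m + k), show m + k + K = m + M from by linarith [harr m], hexp m]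
  -- congruence lemmas for classes
  have hDcongr : ∀ a b : ℕ, a % 2 = b % 2 → Dcl p g a = Dcl p g b := by
    intro a b hab
    ext x
    rw [mem_Dcl p g hp3 hp2 hg2, mem_Dcl p g hp3 hp2 hg2]
    constructor <;> rintro ⟨m, hm, hx⟩ <;> exact ⟨m, by omega, hx⟩
  have hEcongr : ∀ a b : ℕ, a % 2 = b % 2 → Ecl p g a = Ecl p g b := by
    intro a b hab
    unfold Ecl
    rw [hDcongr a b hab]
  -- parity of k via quadratic residuosity of 2
  have hgk2 : (g : ZMod p) ^ k = 2 := by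
    have := congrArg (ZMod.castHom (dvd_mul_left p 2) (ZMod p)) hc
    simpa [hh, map_pow, map_add, map_natCast, map_ofNat, ZMod.natCast_self,
      ZMod.cast_natCast (dvd_mul_left p 2)] using this
  have hcardp : Nat.card (ZMod p)ˣ = p - 1 := by
    rw [Nat.card_eq_fintype_card, ZMod.card_units_eq_totient, Nat.totient_prime hp]
  have hgup : IsUnit (g : ZMod p) := IsUnit.of_pow_eq_one
    (n := p - 1) (by rw [← hg1]; exact pow_orderOf_eq_one _) (by omega)
  have hordgp : orderOf hgup.unit = Nat.card (ZMod p)ˣ := by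
    rw [hcardp, ← hg1, ← orderOf_units, IsUnit.unit_spec]
  have hsq : IsSquare (2 : ZMod p) ↔ k % 2 = 0 := by
    constructor
    · rintro ⟨y, hy⟩
      have hyu : IsUnit y := by
        have h2u : IsUnit (y * y) := by rw [← hy, ← hgk2]; exact hgup.pow k
        exact isUnit_of_mul_isUnit_left h2u
      obtain ⟨m, hm⟩ := exists_pow_eq' hgup.unit hordgp hyu.unit
      have hval : (g : ZMod p) ^ m = y := by
        have := congrArg (Units.val) hm
        rwa [Units.val_pow_eq_pow_val, IsUnit.unit_spec, IsUnit.unit_spec] at this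
      have hpow : hgup.unit ^ k = hgup.unit ^ (2 * m) := by
        apply Units.ext
        rw [Units.val_pow_eq_pow_val, Units.val_pow_eq_pow_val, IsUnit.unit_spec,
          hgk2, hy, two_mul, pow_add, hval]
      have hmeq := pow_eq_pow_iff_modEq.mp hpow
      rw [hordgp, hcardp] at hmeq
      have h2d : (2 : ℕ) ∣ p - 1 := by omega
      have := Nat.ModEq.of_dvd h2d hmeq
      have h2 : k % 2 = (2 * m) % 2 := this
      omega
    · intro hk2
      obtain ⟨t, ht⟩ : ∃ t, k = 2 * t := ⟨k / 2, by omega⟩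
      exact ⟨(g : ZMod p) ^ t, by rw [← hgk2, ht, two_mul, pow_add]⟩
  have hiff : (p % 8 = 1 ∨ p % 8 = 7) ↔ k % 2 = 0 :=
    (ZMod.exists_sq_eq_two_iff (by omega : p ≠ 2)).symm.trans hsq
  constructor
  · intro hcase
    have hk0 : k % 2 = 0 := hiff.mp hcase
    constructor
    · exact (hDcongr i (i + k) (by omega)).trans (keyD i).symm
    · exact (hEcongr i (i + k) (by omega)).trans (keyE i).symm
  · intro hcase
    have hk1 : k % 2 = 1 := by
      rcases Nat.mod_two_eq_zero_or_one k with h0 | h1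
      · exfalso
        have := hiff.mpr h0
        omega
      · exact h1
    constructor
    · exact (hDcongr ((i + 1) % 2) (i + k) (by omega)).trans (keyD i).symm
    · exact (hEcongr ((i + 1) % 2) (i + k) (by omega)).trans (keyE i).symm
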